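/- Let p, q ∈ (0,1), φ ∈ [0,2π), and let |ψ₀⟩ = √p|0⟩ + √(1−p)|1⟩ and |ψ₁⟩ = √q|0⟩ + e^{iφ}√(1−q)|1⟩ be distinct pure qubit states, excluding the case where p = q and φ = π both hold. Set ρ₀ = |ψ₀⟩⟨ψ₀| and ρ₁ = |ψ₁⟩⟨ψ₁|. Then for any ε ∈ (0,1) there exists n_ε such that for all n ≥ n_ε, inf{ Tr(Z[ρ₁^{⊗n}] E) : E Hermitian on (ℂ²)^{⊗n}, 0 ≤ E ≤ I, Tr(Z[ρ₀^{⊗n}] E) ≥ 1−ε } = 0. -/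

import Mathlib

open Matrix Complex Set Filter

noncomputable section

/-- Number of 1s in a bit string. -/
def ones {n : ℕ} (x : Fin n → Fin 2) : ℕ := (Finset.univ.filter fun i => x i = 1).card

/-- The `n`-fold tensor power of a one-qubit operator, as a matrix indexed by bit strings. -/
def mpow (n : ℕ) (ρ : Matrix (Fin 2) (Fin 2) ℂ) :
    Matrix (Fin n → Fin 2) (Fin n → Fin 2) ℂ :=
  Matrix.of fun x y => ∏ i, ρ (x i) (y i)

/-- The parity operator ω = σ_z^{⊗n}: it multiplies a computational basis vector by
(-1)^(number of 1s). -/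
def parityOp (n : ℕ) : Matrix (Fin n → Fin 2) (Fin n → Fin 2) ℂ :=
  Matrix.diagonal fun x => (-1 : ℂ) ^ ones x

/-- The ℤ₂-twirling Z[X] = ½ (X + ωXω). -/
def twirl {n : ℕ} (X : Matrix (Fin n → Fin 2) (Fin n → Fin 2) ℂ) :
    Matrix (Fin n → Fin 2) (Fin n → Fin 2) ℂ :=
  (2 : ℂ)⁻¹ • (X + parityOp n * X * parityOp n)

/-- Rank-one projection |ψ⟩⟨ψ| on one qubit. -/
def projv (ψ : Fin 2 → ℂ) : Matrix (Fin 2) (Fin 2) ℂ := vecMulVec ψ (star ψ)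

/-- Rank-one projection |ψ⟩⟨ψ| on n qubits. -/
def projN {n : ℕ} (ψ : (Fin n → Fin 2) → ℂ) :
    Matrix (Fin n → Fin 2) (Fin n → Fin 2) ℂ := vecMulVec ψ (star ψ)

def ket0 : Fin 2 → ℂ := ![1, 0]

def ket1 : Fin 2 → ℂ := ![0, 1]

/-- The qubit state √p |0⟩ + e^{iφ} √(1-p) |1⟩. -/
def qubit (p φ : ℝ) : Fin 2 → ℂ :=
  ![(Real.sqrt p : ℂ), Complex.exp (Complex.I * φ) * (Real.sqrt (1 - p) : ℂ)]

/-- The qubit state √p |0⟩ + √(1-p) |1⟩. -/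
def qubitR (p : ℝ) : Fin 2 → ℂ := ![(Real.sqrt p : ℂ), (Real.sqrt (1 - p) : ℂ)]

open scoped ComplexOrder

/-- The set of type-II error probabilities Tr(σ₁ E) over POVM elements 0 ≤ E ≤ I
(Loewner order) whose type-I error is at most ε, i.e. Tr(σ₀ E) ≥ 1-ε. -/
def errSet (n : ℕ) (σ0 σ1 : Matrix (Fin n → Fin 2) (Fin n → Fin 2) ℂ) (ε : ℝ) : Set ℝ :=
  { x | ∃ E : Matrix (Fin n → Fin 2) (Fin n → Fin 2) ℂ,
      E.IsHermitian ∧ E.PosSemidef ∧ (1 - E).PosSemidef ∧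
      1 - ε ≤ ((σ0 * E).trace).re ∧ x = ((σ1 * E).trace).re }

/-! ### Auxiliary material -/

set_option linter.unusedSectionVars false

section aux

/-- n-fold tensor power of a one-qubit vector. -/
def tpow (n : ℕ) (ψ : Fin 2 → ℂ) : (Fin n → Fin 2) → ℂ := fun x => ∏ i, ψ (x i)

/-- One-qubit σ_z applied to a vector. -/
def sz (ψ : Fin 2 → ℂ) : Fin 2 → ℂ := fun b => if b = 1 then -ψ b else ψ b

lemma neg_one_pow_ones {n : ℕ} (x : Fin n → Fin 2) :
    ((-1 : ℂ) ^ ones x) = ∏ i, (if x i = 1 then (-1 : ℂ) else 1) := by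
  rw [← Finset.prod_filter, Finset.prod_const, ones]

lemma tpow_sz {n : ℕ} (ψ : Fin 2 → ℂ) (x : Fin n → Fin 2) :
    tpow n (sz ψ) x = (-1 : ℂ) ^ ones x * tpow n ψ x := by
  rw [neg_one_pow_ones, tpow, tpow, ← Finset.prod_mul_distrib]
  refine Finset.prod_congr rfl fun i _ => ?_
  by_cases h : x i = 1 <;> simp [sz, h]

lemma sum_prod_pow {n : ℕ} (h : Fin 2 → ℂ) :
    ∑ x : Fin n → Fin 2, ∏ i, h (x i) = (∑ b, h b) ^ n := by
  have := Finset.prod_univ_sum (fun _ : Fin n => (Finset.univ : Finset (Fin 2)))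
    (fun _ b => h b)
  rw [Finset.prod_const, Finset.card_univ, Fintype.card_fin, Fintype.piFinset_univ] at this
  exact this.symm

lemma dot_tpow {n : ℕ} (f g : Fin 2 → ℂ) :
    star (tpow n f) ⬝ᵥ tpow n g = ((star f ⬝ᵥ g)) ^ n := by
  rw [show ((star f ⬝ᵥ g) : ℂ) = ∑ b, starRingEnd ℂ (f b) * g b from rfl, ← sum_prod_pow]
  simp only [dotProduct, Pi.star_apply, tpow, ← Finset.prod_mul_distrib, RCLike.star_def, map_prod]

lemma mpow_projv {n : ℕ} (ψ : Fin 2 → ℂ) : mpow n (projv ψ) = projN (tpow n ψ) := by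
  ext x y
  simp only [mpow, projv, projN, Matrix.of_apply, vecMulVec_apply, Pi.star_apply, tpow,
    RCLike.star_def, map_prod, ← Finset.prod_mul_distrib]

lemma twirl_projN_tpow {n : ℕ} (ψ : Fin 2 → ℂ) :
    twirl (projN (tpow n ψ)) = (2 : ℂ)⁻¹ • (projN (tpow n ψ) + projN (tpow n (sz ψ))) := by
  unfold twirl parityOp
  congr 1
  congr 1
  ext x y
  simp only [Matrix.diagonal_mul, Matrix.mul_diagonal, projN, vecMulVec_apply, Pi.star_apply,
    tpow_sz, RCLike.star_def, _root_.map_mul, map_pow, _root_.map_neg, _root_.map_one]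
  ring

end aux

section proj
variable {m : Type*} [Fintype m] [DecidableEq m]

lemma vecMulVec_mul_vecMulVec' (a b c d : m → ℂ) :
    vecMulVec a b * vecMulVec c d = (b ⬝ᵥ c) • vecMulVec a d := by
  ext x y
  simp [Matrix.mul_apply, vecMulVec_apply, dotProduct, Finset.mul_sum, Finset.sum_mul]
  congr 1; ext i; ring

lemma vecMulVec_mulVec' (a b x : m → ℂ) :
    vecMulVec a b *ᵥ x = (b ⬝ᵥ x) • a := by
  funext i
  simp only [mulVec, vecMulVec_apply, dotProduct, Pi.smul_apply, smul_eq_mul, Finset.sum_mul]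
  apply Finset.sum_congr rfl; intros; ring

lemma trace_vecMulVec_mul (a b : m → ℂ) (M : Matrix m m ℂ) :
    (vecMulVec a b * M).trace = b ⬝ᵥ (M *ᵥ a) := by
  simp only [Matrix.trace, Matrix.diag, Matrix.mul_apply, vecMulVec_apply, dotProduct, mulVec,
    Finset.mul_sum]
  rw [Finset.sum_comm]
  congr 1; ext i; congr 1; ext j; ring

lemma conjTranspose_vecMulVec (a b : m → ℂ) :
    (vecMulVec a b)ᴴ = vecMulVec (star b) (star a) := by
  ext x y
  simp [vecMulVec_apply, Matrix.conjTranspose_apply, mul_comm]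

lemma psd_of_herm_idem' (M : Matrix m m ℂ) (hH : M.IsHermitian) (hI : M * M = M) :
    M.PosSemidef := by
  have h := Matrix.posSemidef_conjTranspose_mul_self M
  rwa [hH.eq, hI] at h

variable (u w : m → ℂ) (g : ℂ)

/-- The (unnormalized) Gram combination for the projection onto span{u,w}. -/
def Mproj : Matrix m m ℂ :=
  vecMulVec u (star u) + vecMulVec w (star w)
    - g • (vecMulVec u (star w) + vecMulVec w (star u))

/-- The orthogonal projection onto span{u,w} for unit u, w with ⟨u,w⟩ = g real. -/
def Pproj : Matrix m m ℂ := (1 - g ^ 2)⁻¹ • Mproj u w g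

variable (hg : star g = g)
variable (huu : star u ⬝ᵥ u = 1) (hww : star w ⬝ᵥ w = 1)
variable (huw : star u ⬝ᵥ w = g) (hwu : star w ⬝ᵥ u = g)

include hg in
lemma Mproj_herm : (Mproj u w g).IsHermitian := by
  unfold Matrix.IsHermitian Mproj
  simp only [conjTranspose_sub, conjTranspose_add, conjTranspose_smul,
    _root_.conjTranspose_vecMulVec, star_star, hg]
  abel

include huu hww huw hwu in
lemma Mproj_sq : Mproj u w g * Mproj u w g = (1 - g ^ 2) • Mproj u w g := by
  unfold Mproj
  simp only [sub_mul, mul_sub, add_mul, mul_add, smul_mul_assoc, mul_smul_comm,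
    vecMulVec_mul_vecMulVec', huu, hww, huw, hwu, smul_smul]
  module

include huu hwu in
lemma Mproj_mulVec_u : Mproj u w g *ᵥ u = (1 - g ^ 2) • u := by
  unfold Mproj
  simp only [sub_mulVec, add_mulVec, smul_mulVec, vecMulVec_mulVec', huu, hwu]
  module

include hww huw in
lemma Mproj_mulVec_w : Mproj u w g *ᵥ w = (1 - g ^ 2) • w := by
  unfold Mproj
  simp only [sub_mulVec, add_mulVec, smul_mulVec, vecMulVec_mulVec', hww, huw]
  module

lemma dot_Mproj (v : m → ℂ) :
    star v ⬝ᵥ (Mproj u w g *ᵥ v)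
      = (star u ⬝ᵥ v) * (star v ⬝ᵥ u) + (star w ⬝ᵥ v) * (star v ⬝ᵥ w)
        - g * ((star w ⬝ᵥ v) * (star v ⬝ᵥ u) + (star u ⬝ᵥ v) * (star v ⬝ᵥ w)) := by
  simp only [Mproj, sub_mulVec, add_mulVec, smul_mulVec, vecMulVec_mulVec',
    dotProduct_sub, dotProduct_add, dotProduct_smul, smul_eq_mul]
  try ring

include hg in
lemma Pproj_herm : (Pproj u w g).IsHermitian := by
  have hM := Mproj_herm u w g hg
  unfold Pproj Matrix.IsHermitian
  rw [conjTranspose_smul, hM.eq]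
  congr 1
  simp only [star_inv₀, star_sub, star_one, star_pow, hg]

variable (hne : (1 : ℂ) - g ^ 2 ≠ 0)

include huu hww huw hwu hne in
lemma Pproj_sq : Pproj u w g * Pproj u w g = Pproj u w g := by
  unfold Pproj
  rw [smul_mul_assoc, mul_smul_comm, Mproj_sq u w g huu hww huw hwu, smul_smul, smul_smul]
  congr 1
  field_simp

include huu hwu hne in
lemma Pproj_mulVec_u : Pproj u w g *ᵥ u = u := by
  unfold Pproj
  rw [smul_mulVec, Mproj_mulVec_u u w g huu hwu, smul_smul, inv_mul_cancel₀ hne, one_smul]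

include hww huw hne in
lemma Pproj_mulVec_w : Pproj u w g *ᵥ w = w := by
  unfold Pproj
  rw [smul_mulVec, Mproj_mulVec_w u w g hww huw, smul_smul, inv_mul_cancel₀ hne, one_smul]

end proj

section onequbit
variable {p q φ : ℝ}

lemma conj_exp_mul (φ : ℝ) :
    starRingEnd ℂ (Complex.exp (Complex.I * φ)) * Complex.exp (Complex.I * φ) = 1 := by
  rw [← Complex.exp_conj, ← Complex.exp_add]
  simp [Complex.conj_I, Complex.conj_ofReal]

lemma sqc (h0 : 0 ≤ q) : (Real.sqrt q : ℂ) * Real.sqrt q = (q : ℂ) := by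
  rw [← Complex.ofReal_mul, Real.mul_self_sqrt h0]

lemma sz_qubit : sz (qubit q φ) =
    ![(Real.sqrt q : ℂ), -(Complex.exp (Complex.I * φ) * (Real.sqrt (1 - q) : ℂ))] := by
  funext b
  fin_cases b <;> simp [sz, qubit]

lemma sz_qubitR : sz (qubitR p) = ![(Real.sqrt p : ℂ), -(Real.sqrt (1 - p) : ℂ)] := by
  funext b
  fin_cases b <;> simp [sz, qubitR]

lemma dot_qubit_self (h0 : 0 ≤ q) (h1 : q ≤ 1) :
    star (qubit q φ) ⬝ᵥ qubit q φ = 1 := by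
  simp only [dotProduct, Fin.sum_univ_two, Pi.star_apply, qubit, Matrix.cons_val_zero,
    Matrix.cons_val_one, Matrix.head_cons, RCLike.star_def, _root_.map_mul, Complex.conj_ofReal]
  linear_combination (norm := (push_cast; ring_nf)) sqc h0 + conj_exp_mul φ * ((Real.sqrt (1-q) : ℂ) * (Real.sqrt (1-q)))
    + sqc (q := 1 - q) (by linarith)

lemma dot_sz_qubit_self (h0 : 0 ≤ q) (h1 : q ≤ 1) :
    star (sz (qubit q φ)) ⬝ᵥ sz (qubit q φ) = 1 := by
  rw [sz_qubit]
  simp only [dotProduct, Fin.sum_univ_two, Pi.star_apply, Matrix.cons_val_zero,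
    Matrix.cons_val_one, Matrix.head_cons, RCLike.star_def, _root_.map_mul, _root_.map_neg,
    Complex.conj_ofReal]
  linear_combination (norm := (push_cast; ring_nf)) sqc h0 + conj_exp_mul φ * ((Real.sqrt (1-q) : ℂ) * (Real.sqrt (1-q)))
    + sqc (q := 1 - q) (by linarith)

lemma dot_qubit_sz (h0 : 0 ≤ q) (h1 : q ≤ 1) :
    star (qubit q φ) ⬝ᵥ sz (qubit q φ) = ((2 * q - 1 : ℝ) : ℂ) := by
  rw [sz_qubit]
  simp only [dotProduct, Fin.sum_univ_two, Pi.star_apply, qubit, Matrix.cons_val_zero,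
    Matrix.cons_val_one, Matrix.head_cons, RCLike.star_def, _root_.map_mul, Complex.conj_ofReal]
  push_cast
  linear_combination (norm := (push_cast; ring_nf)) sqc h0 - conj_exp_mul φ * ((Real.sqrt (1-q) : ℂ) * (Real.sqrt (1-q)))
    - sqc (q := 1 - q) (by linarith)

lemma dot_sz_qubit (h0 : 0 ≤ q) (h1 : q ≤ 1) :
    star (sz (qubit q φ)) ⬝ᵥ qubit q φ = ((2 * q - 1 : ℝ) : ℂ) := by
  rw [sz_qubit]
  simp only [dotProduct, Fin.sum_univ_two, Pi.star_apply, qubit, Matrix.cons_val_zero,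
    Matrix.cons_val_one, Matrix.head_cons, RCLike.star_def, _root_.map_mul, _root_.map_neg,
    Complex.conj_ofReal]
  push_cast
  linear_combination (norm := (push_cast; ring_nf)) sqc h0 - conj_exp_mul φ * ((Real.sqrt (1-q) : ℂ) * (Real.sqrt (1-q)))
    - sqc (q := 1 - q) (by linarith)

lemma dot_qubit_qubitR :
    star (qubit q φ) ⬝ᵥ qubitR p
      = ((Real.sqrt q * Real.sqrt p : ℝ) : ℂ)
        + Complex.exp (-(Complex.I * φ)) * ((Real.sqrt (1-q) * Real.sqrt (1-p) : ℝ) : ℂ) := by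
  simp only [dotProduct, Fin.sum_univ_two, Pi.star_apply, qubit, qubitR, Matrix.cons_val_zero,
    Matrix.cons_val_one, Matrix.head_cons, RCLike.star_def, _root_.map_mul, Complex.conj_ofReal]
  push_cast
  rw [show ((starRingEnd ℂ) (Complex.exp (Complex.I * φ))) = Complex.exp (-(Complex.I * φ)) by
    rw [← Complex.exp_conj]; congr 1; simp [Complex.conj_I, Complex.conj_ofReal]]
  ring

lemma dot_sz_qubit_qubitR :
    star (sz (qubit q φ)) ⬝ᵥ qubitR p
      = ((Real.sqrt q * Real.sqrt p : ℝ) : ℂ)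
        - Complex.exp (-(Complex.I * φ)) * ((Real.sqrt (1-q) * Real.sqrt (1-p) : ℝ) : ℂ) := by
  rw [sz_qubit]
  simp only [dotProduct, Fin.sum_univ_two, Pi.star_apply, qubitR, Matrix.cons_val_zero,
    Matrix.cons_val_one, Matrix.head_cons, RCLike.star_def, _root_.map_mul, _root_.map_neg,
    Complex.conj_ofReal]
  push_cast
  rw [show ((starRingEnd ℂ) (Complex.exp (Complex.I * φ))) = Complex.exp (-(Complex.I * φ)) by
    rw [← Complex.exp_conj]; congr 1; simp [Complex.conj_I, Complex.conj_ofReal]]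
  ring

lemma dot_qubit_sz_qubitR :
    star (qubit q φ) ⬝ᵥ sz (qubitR p)
      = ((Real.sqrt q * Real.sqrt p : ℝ) : ℂ)
        - Complex.exp (-(Complex.I * φ)) * ((Real.sqrt (1-q) * Real.sqrt (1-p) : ℝ) : ℂ) := by
  rw [sz_qubitR]
  simp only [dotProduct, Fin.sum_univ_two, Pi.star_apply, qubit, Matrix.cons_val_zero,
    Matrix.cons_val_one, Matrix.head_cons, RCLike.star_def, _root_.map_mul, Complex.conj_ofReal]
  push_cast
  rw [show ((starRingEnd ℂ) (Complex.exp (Complex.I * φ))) = Complex.exp (-(Complex.I * φ)) by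
    rw [← Complex.exp_conj]; congr 1; simp [Complex.conj_I, Complex.conj_ofReal]]
  ring

lemma dot_sz_qubit_sz_qubitR :
    star (sz (qubit q φ)) ⬝ᵥ sz (qubitR p)
      = ((Real.sqrt q * Real.sqrt p : ℝ) : ℂ)
        + Complex.exp (-(Complex.I * φ)) * ((Real.sqrt (1-q) * Real.sqrt (1-p) : ℝ) : ℂ) := by
  rw [sz_qubit, sz_qubitR]
  simp only [dotProduct, Fin.sum_univ_two, Pi.star_apply, Matrix.cons_val_zero,
    Matrix.cons_val_one, Matrix.head_cons, RCLike.star_def, _root_.map_mul, _root_.map_neg,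
    Complex.conj_ofReal]
  push_cast
  rw [show ((starRingEnd ℂ) (Complex.exp (Complex.I * φ))) = Complex.exp (-(Complex.I * φ)) by
    rw [← Complex.exp_conj]; congr 1; simp [Complex.conj_I, Complex.conj_ofReal]]
  ring

lemma normSq_form (a b : ℝ) :
    Complex.normSq ((a : ℂ) + Complex.exp (-(Complex.I * φ)) * (b : ℂ))
      = a^2 + b^2 + 2*a*b*Real.cos φ := by
  have : Complex.exp (-(Complex.I * φ)) = Complex.exp ((-φ : ℝ) * Complex.I) := by
    congr 1; push_cast; ring
  rw [this, Complex.exp_mul_I]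
  simp only [Complex.normSq_apply, Complex.add_re, Complex.add_im, Complex.ofReal_re,
    Complex.ofReal_im, Complex.mul_re, Complex.mul_im, Complex.cos_ofReal_re,
    Complex.cos_ofReal_im, Complex.sin_ofReal_re, Complex.sin_ofReal_im, Complex.I_re,
    Complex.I_im, Real.cos_neg, Real.sin_neg]
  nlinarith [Real.sin_sq_add_cos_sq φ]

lemma qubitR_eq (p : ℝ) : qubitR p = qubit p 0 := by
  funext b
  fin_cases b <;> simp [qubit, qubitR]

end onequbit
set_option maxHeartbeats 2000000 in
theorem typeII_error_vanishes_generic (p q φ : ℝ)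
    (hp : p ∈ Set.Ioo (0 : ℝ) 1) (hq : q ∈ Set.Ioo (0 : ℝ) 1)
    (hφ : φ ∈ Set.Ico (0 : ℝ) (2 * Real.pi))
    (hdist : qubitR p ≠ qubit q φ) (hexc : ¬(p = q ∧ φ = Real.pi)) :
    ∀ ε ∈ Set.Ioo (0 : ℝ) 1, ∃ nε : ℕ, ∀ n : ℕ, nε ≤ n →
      sInf (errSet n (twirl (mpow n (projv (qubitR p)))) (twirl (mpow n (projv (qubit q φ)))) ε)
        = 0 := by
  obtain ⟨hp0, hp1⟩ := hp
  obtain ⟨hq0, hq1⟩ := hq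
  intro ε hε
  obtain ⟨hε0, hε1⟩ := hε
  -- one-qubit scalars
  set a : ℝ := Real.sqrt q * Real.sqrt p with ha_def
  set b : ℝ := Real.sqrt (1-q) * Real.sqrt (1-p) with hb_def
  set α : ℂ := (a : ℂ) + Complex.exp (-(Complex.I * φ)) * (b : ℂ) with hα_def
  set β : ℂ := (a : ℂ) - Complex.exp (-(Complex.I * φ)) * (b : ℂ) with hβ_def
  have ha : 0 < a := mul_pos (Real.sqrt_pos.2 hq0) (Real.sqrt_pos.2 hp0)
  have hb : 0 < b := mul_pos (Real.sqrt_pos.2 (by linarith)) (Real.sqrt_pos.2 (by linarith))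
  have hsq : Real.sqrt q ^ 2 = q := Real.sq_sqrt hq0.le
  have hsp : Real.sqrt p ^ 2 = p := Real.sq_sqrt hp0.le
  have hs1q : Real.sqrt (1-q) ^ 2 = 1-q := Real.sq_sqrt (by linarith)
  have hs1p : Real.sqrt (1-p) ^ 2 = 1-p := Real.sq_sqrt (by linarith)
  have hab : a + b ≤ 1 := by
    rw [ha_def, hb_def]
    nlinarith [sq_nonneg (Real.sqrt q - Real.sqrt p),
      sq_nonneg (Real.sqrt (1-q) - Real.sqrt (1-p))]
  have habs : p ≠ q → a + b < 1 := by
    intro hpq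
    have h1 : Real.sqrt q ≠ Real.sqrt p := by
      intro h
      exact hpq (by rw [← hsp, ← hsq, h])
    have h2 : 0 < (Real.sqrt q - Real.sqrt p)^2 := by
      have := sub_ne_zero.2 h1
      positivity
    rw [ha_def, hb_def]
    nlinarith [sq_nonneg (Real.sqrt (1-q) - Real.sqrt (1-p))]
  have hcos1 : Real.cos φ ≤ 1 := Real.cos_le_one φ
  have hcosm1 : -1 ≤ Real.cos φ := Real.neg_one_le_cos φ
  have hnsα : Complex.normSq α = a^2 + b^2 + 2*a*b*Real.cos φ := by
    rw [hα_def]; exact normSq_form a b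
  have hnsβ : Complex.normSq β = a^2 + b^2 - 2*a*b*Real.cos φ := by
    have h := normSq_form (φ := φ) a (-b)
    push_cast at h
    rw [hβ_def, show ((a:ℂ) - Complex.exp (-(Complex.I * φ)) * (b:ℂ))
      = (a:ℂ) + Complex.exp (-(Complex.I * φ)) * (-(b:ℂ)) by ring, h]
    ring
  have habslt : ∀ z : ℂ, Complex.normSq z < 1 → ‖z‖ < 1 := by
    intro z hz
    nlinarith [Complex.sq_norm z, norm_nonneg z]
  have hαlt : ‖α‖ < 1 := by
    apply habslt; rw [hnsα]
    rcases eq_or_lt_of_le hcos1 with hc | hc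
    · have hφ0 : φ = 0 :=
        (Real.cos_eq_one_iff_of_lt_of_lt (by linarith [hφ.1, Real.two_pi_pos]) hφ.2).1 hc
      have hpq : p ≠ q := by
        intro hpqe
        exact hdist (by rw [hφ0, ← qubitR_eq, hpqe])
      nlinarith [habs hpq, mul_pos ha hb]
    · nlinarith [hab, mul_pos ha hb]
  have hβlt : ‖β‖ < 1 := by
    apply habslt; rw [hnsβ]
    rcases eq_or_lt_of_le hcosm1 with hc | hc
    · have hφπ : φ = Real.pi := by
        have h2 : Real.cos (φ - Real.pi) = 1 := by
          rw [Real.cos_sub_pi, ← hc]; norm_num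
        have h3 := (Real.cos_eq_one_iff_of_lt_of_lt (x := φ - Real.pi)
          (by linarith [hφ.1, Real.pi_pos]) (by linarith [hφ.2, Real.pi_pos])).1 h2
        linarith
      have hpq : p ≠ q := fun hpqe => hexc ⟨hpqe, hφπ⟩
      nlinarith [habs hpq, mul_pos ha hb]
    · nlinarith [hab, mul_pos ha hb]
  -- the contraction rate
  set r : ℝ := max (max (‖α‖) (‖β‖)) |2*q-1| with hr_def
  have hr0 : 0 ≤ r := le_trans (norm_nonneg α) ((le_max_left _ _).trans (le_max_left _ _))
  have hrabs : |2*q-1| < 1 := abs_lt.2 ⟨by linarith, by linarith⟩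
  have hr1 : r < 1 := by
    rw [hr_def]
    exact max_lt (max_lt hαlt hβlt) hrabs
  set δ : ℝ := min (ε/8) 2⁻¹ with hδ_def
  have hδ0 : 0 < δ := lt_min (by linarith) (by norm_num)
  obtain ⟨N, hN⟩ := eventually_atTop.1
    ((tendsto_pow_atTop_nhds_zero_of_lt_one hr0 hr1).eventually_lt_const hδ0)
  refine ⟨N, fun n hn => ?_⟩
  have hrn : r^n < δ := hN n hn
  have hrn0 : 0 ≤ r^n := pow_nonneg hr0 n
  have hrn1 : r^n ≤ 1 := pow_le_one₀ hr0 hr1.le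
  have hrnhalf : r^n ≤ 2⁻¹ := le_trans hrn.le (min_le_right _ _)
  have hrneps : r^n ≤ ε/8 := le_trans hrn.le (min_le_left _ _)
  -- n-qubit vectors
  set u := tpow n (qubit q φ) with hu_def
  set w := tpow n (sz (qubit q φ)) with hw_def
  set v := tpow n (qubitR p) with hv_def
  set v' := tpow n (sz (qubitR p)) with hv'_def
  set G : ℂ := (((2*q-1)^n : ℝ) : ℂ) with hG_def
  have hGstar : star G = G := by
    rw [hG_def, RCLike.star_def, Complex.conj_ofReal]
  have habsGr : ‖G‖ ≤ r^n := by
    rw [hG_def, Complex.norm_real, Real.norm_eq_abs, _root_.abs_pow]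
    exact pow_le_pow_left₀ (abs_nonneg _) (le_max_right _ _) n
  -- dot products
  have huu : star u ⬝ᵥ u = 1 := by
    rw [hu_def, dot_tpow, dot_qubit_self hq0.le hq1.le, one_pow]
  have hww : star w ⬝ᵥ w = 1 := by
    rw [hw_def, dot_tpow, dot_sz_qubit_self hq0.le hq1.le, one_pow]
  have huw : star u ⬝ᵥ w = G := by
    rw [hu_def, hw_def, dot_tpow, dot_qubit_sz hq0.le hq1.le, hG_def]
    push_cast; ring
  have hwu : star w ⬝ᵥ u = G := by
    rw [hu_def, hw_def, dot_tpow, dot_sz_qubit hq0.le hq1.le, hG_def]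
    push_cast; ring
  have huv : star u ⬝ᵥ v = α^n := by
    rw [hu_def, hv_def, dot_tpow, dot_qubit_qubitR, hα_def, ha_def, hb_def]
  have hwv : star w ⬝ᵥ v = β^n := by
    rw [hw_def, hv_def, dot_tpow, dot_sz_qubit_qubitR, hβ_def, ha_def, hb_def]
  have huv' : star u ⬝ᵥ v' = β^n := by
    rw [hu_def, hv'_def, dot_tpow, dot_qubit_sz_qubitR, hβ_def, ha_def, hb_def]
  have hwv' : star w ⬝ᵥ v' = α^n := by
    rw [hw_def, hv'_def, dot_tpow, dot_sz_qubit_sz_qubitR, hα_def, ha_def, hb_def]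
  have hvv : star v ⬝ᵥ v = 1 := by
    rw [hv_def, qubitR_eq, dot_tpow, dot_qubit_self hp0.le hp1.le, one_pow]
  have hv'v' : star v' ⬝ᵥ v' = 1 := by
    rw [hv'_def, qubitR_eq, dot_tpow, dot_sz_qubit_self hp0.le hp1.le, one_pow]
  have hA : ‖α^n‖ ≤ r^n := by
    rw [norm_pow]
    exact pow_le_pow_left₀ (norm_nonneg _) ((le_max_left _ _).trans (le_max_left _ _)) n
  have hB : ‖β^n‖ ≤ r^n := by
    rw [norm_pow]
    exact pow_le_pow_left₀ (norm_nonneg _) ((le_max_right _ _).trans (le_max_left _ _)) n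
  -- nondegeneracy
  have hgr2 : ((2*q-1)^n)^2 ≤ 2⁻¹ := by
    have h1 : |2*q-1|^n ≤ 2⁻¹ :=
      le_trans (pow_le_pow_left₀ (abs_nonneg _) (le_max_right _ _) n) hrnhalf
    have h2 : (0:ℝ) ≤ |2*q-1|^n := pow_nonneg (abs_nonneg _) n
    have h3 : |(2*q-1)^n| = |2*q-1|^n := abs_pow _ _
    nlinarith [_root_.sq_abs ((2*q-1)^n)]
  have h1Gpos : (0:ℝ) < 1 - ((2*q-1)^n)^2 := by nlinarith
  have h1G : (1:ℂ) - G^2 = ((1 - ((2*q-1)^n)^2 : ℝ) : ℂ) := by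
    rw [hG_def]; push_cast; ring
  have hne : (1:ℂ) - G^2 ≠ 0 := by
    rw [h1G]
    exact_mod_cast ne_of_gt h1Gpos
  have habsinv : ‖((1:ℂ) - G^2)⁻¹‖ ≤ 2 := by
    rw [norm_inv, h1G, Complex.norm_real, Real.norm_eq_abs, abs_of_pos h1Gpos]
    rw [inv_le_comm₀ h1Gpos (by norm_num : (0:ℝ) < 2)]
    nlinarith
  -- the POVM element
  set P := Pproj u w G with hP_def
  have hPherm : P.IsHermitian := Pproj_herm u w G hGstar
  have hPsq : P * P = P := Pproj_sq u w G huu hww huw hwu hne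
  have hPpsd : P.PosSemidef := psd_of_herm_idem' P hPherm hPsq
  set E := (1 : Matrix (Fin n → Fin 2) (Fin n → Fin 2) ℂ) - P with hE_def
  have hEherm : E.IsHermitian := Matrix.isHermitian_one.sub hPherm
  have hEsq : E * E = E := by
    rw [hE_def, sub_mul, one_mul, mul_sub, mul_one, hPsq, sub_self, sub_zero]
  have hEpsd : E.PosSemidef := psd_of_herm_idem' E hEherm hEsq
  have h1Epsd : ((1 : Matrix (Fin n → Fin 2) (Fin n → Fin 2) ℂ) - E).PosSemidef := by
    rw [hE_def, sub_sub_cancel]; exact hPpsd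
  -- σ decompositions
  have hσ1 : twirl (mpow n (projv (qubit q φ))) = (2:ℂ)⁻¹ • (projN u + projN w) := by
    rw [mpow_projv, twirl_projN_tpow, hu_def, hw_def]
  have hσ0 : twirl (mpow n (projv (qubitR p))) = (2:ℂ)⁻¹ • (projN v + projN v') := by
    rw [mpow_projv, twirl_projN_tpow, hv_def, hv'_def]
  have htr : ∀ (x y : (Fin n → Fin 2) → ℂ) (F : Matrix (Fin n → Fin 2) (Fin n → Fin 2) ℂ),
      (((2:ℂ)⁻¹ • (projN x + projN y)) * F).trace
        = (2:ℂ)⁻¹ * (star x ⬝ᵥ (F *ᵥ x) + star y ⬝ᵥ (F *ᵥ y)) := by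
    intro x y F
    rw [smul_mul_assoc, Matrix.trace_smul, add_mul, Matrix.trace_add, projN, projN,
      trace_vecMulVec_mul, trace_vecMulVec_mul, smul_eq_mul]
  -- trace against σ1 vanishes
  have hEu : E *ᵥ u = 0 := by
    rw [hE_def, Matrix.sub_mulVec, Matrix.one_mulVec,
      Pproj_mulVec_u u w G huu hwu hne, sub_self]
  have hEw : E *ᵥ w = 0 := by
    rw [hE_def, Matrix.sub_mulVec, Matrix.one_mulVec,
      Pproj_mulVec_w u w G hww huw hne, sub_self]
  have htr1 : ((twirl (mpow n (projv (qubit q φ))) * E).trace) = 0 := by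
    rw [hσ1, htr, hEu, hEw]
    simp
  -- trace against σ0
  have key : ∀ z : (Fin n → Fin 2) → ℂ, star z ⬝ᵥ z = 1 →
      ‖star u ⬝ᵥ z‖ ≤ r^n → ‖star w ⬝ᵥ z‖ ≤ r^n →
      1 - ε ≤ (star z ⬝ᵥ (E *ᵥ z)).re := by
    intro z hz hcu hcw
    have hzu : ‖star z ⬝ᵥ u‖ ≤ r^n := by
      rw [star_dotProduct, RCLike.star_def, Complex.norm_conj]; exact hcu
    have hzw : ‖star z ⬝ᵥ w‖ ≤ r^n := by
      rw [star_dotProduct, RCLike.star_def, Complex.norm_conj]; exact hcw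
    have hT : star z ⬝ᵥ (P *ᵥ z) = ((1:ℂ) - G^2)⁻¹ *
        ((star u ⬝ᵥ z) * (star z ⬝ᵥ u) + (star w ⬝ᵥ z) * (star z ⬝ᵥ w)
          - G * ((star w ⬝ᵥ z) * (star z ⬝ᵥ u) + (star u ⬝ᵥ z) * (star z ⬝ᵥ w))) := by
      rw [hP_def, Pproj, smul_mulVec, dotProduct_smul, smul_eq_mul, dot_Mproj]
    have hQ : ‖(star u ⬝ᵥ z) * (star z ⬝ᵥ u) + (star w ⬝ᵥ z) * (star z ⬝ᵥ w)
          - G * ((star w ⬝ᵥ z) * (star z ⬝ᵥ u) + (star u ⬝ᵥ z) * (star z ⬝ᵥ w))‖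
        ≤ 4 * (r^n * r^n) := by
      have t1 : ‖(star u ⬝ᵥ z) * (star z ⬝ᵥ u)‖ ≤ r^n * r^n := by
        rw [norm_mul]; exact mul_le_mul hcu hzu (norm_nonneg _) hrn0
      have t2 : ‖(star w ⬝ᵥ z) * (star z ⬝ᵥ w)‖ ≤ r^n * r^n := by
        rw [norm_mul]; exact mul_le_mul hcw hzw (norm_nonneg _) hrn0
      have t3 : ‖(star w ⬝ᵥ z) * (star z ⬝ᵥ u)‖ ≤ r^n * r^n := by
        rw [norm_mul]; exact mul_le_mul hcw hzu (norm_nonneg _) hrn0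
      have t4 : ‖(star u ⬝ᵥ z) * (star z ⬝ᵥ w)‖ ≤ r^n * r^n := by
        rw [norm_mul]; exact mul_le_mul hcu hzw (norm_nonneg _) hrn0
      calc ‖_‖
          ≤ ‖(star u ⬝ᵥ z) * (star z ⬝ᵥ u) + (star w ⬝ᵥ z) * (star z ⬝ᵥ w)‖
            + ‖G * ((star w ⬝ᵥ z) * (star z ⬝ᵥ u)
              + (star u ⬝ᵥ z) * (star z ⬝ᵥ w))‖ := norm_sub_le _ _
        _ ≤ (r^n * r^n + r^n * r^n)
            + 1 * (r^n * r^n + r^n * r^n) := by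
            rw [norm_mul]
            refine add_le_add (le_trans (norm_add_le _ _) (add_le_add t1 t2)) ?_
            refine mul_le_mul (le_trans habsGr hrn1)
              (le_trans (norm_add_le _ _) (add_le_add t3 t4)) (norm_nonneg _)
              (by norm_num)
        _ = 4 * (r^n * r^n) := by ring
    have habsT : ‖star z ⬝ᵥ (P *ᵥ z)‖ ≤ ε := by
      rw [hT, norm_mul]
      calc ‖((1:ℂ) - G^2)⁻¹‖ * ‖_‖
          ≤ 2 * (4 * (r^n * r^n)) :=
            mul_le_mul habsinv hQ (norm_nonneg _) (by norm_num)
        _ ≤ 8 * r^n := by nlinarith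
        _ ≤ ε := by linarith
    have hEz : star z ⬝ᵥ (E *ᵥ z) = 1 - star z ⬝ᵥ (P *ᵥ z) := by
      rw [hE_def, Matrix.sub_mulVec, Matrix.one_mulVec, dotProduct_sub, hz]
    rw [hEz, Complex.sub_re, Complex.one_re]
    have := Complex.re_le_norm (star z ⬝ᵥ (P *ᵥ z))
    linarith
  have htr0 : 1 - ε ≤ ((twirl (mpow n (projv (qubitR p))) * E).trace).re := by
    rw [hσ0, htr, show ((2:ℂ)⁻¹) = ((2⁻¹:ℝ):ℂ) by norm_num, Complex.re_ofReal_mul,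
      Complex.add_re]
    have h1 := key v hvv (by rw [huv]; exact hA) (by rw [hwv]; exact hB)
    have h2 := key v' hv'v' (by rw [huv']; exact hB) (by rw [hwv']; exact hA)
    linarith
  -- membership of 0
  have h0mem : (0:ℝ) ∈ errSet n (twirl (mpow n (projv (qubitR p))))
      (twirl (mpow n (projv (qubit q φ)))) ε :=
    ⟨E, hEherm, hEpsd, h1Epsd, htr0, by rw [htr1]; simp⟩
  -- nonnegativity of the error set
  have hlb : ∀ x ∈ errSet n (twirl (mpow n (projv (qubitR p))))
      (twirl (mpow n (projv (qubit q φ)))) ε, (0:ℝ) ≤ x := by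
    rintro x ⟨F, -, hFpsd, -, -, rfl⟩
    rw [hσ1, htr, show ((2:ℂ)⁻¹) = ((2⁻¹:ℝ):ℂ) by norm_num, Complex.re_ofReal_mul,
      Complex.add_re]
    have h1 := (Complex.le_def.1 (hFpsd.dotProduct_mulVec_nonneg u)).1
    have h2 := (Complex.le_def.1 (hFpsd.dotProduct_mulVec_nonneg w)).1
    rw [Complex.zero_re] at h1 h2
    positivity
  exact le_antisymm (csInf_le ⟨0, hlb⟩ h0mem) (le_csInf ⟨0, h0mem⟩ hlb)
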